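/- Let W be a symmetric doubly stochastic N×N matrix with smallest eigenvalue λ_N(W), and φ(x) := (1/4)∑_{i,j} W_{ij}‖x_i − x_j‖_F² on St(d,r)^N. Then for all x, y ∈ St(d,r)^N, φ(y) − φ(x) − ⟨grad φ(x), y − x⟩ ≤ (L/2)‖y − x‖_F² with L = 1 − λ_N(W). -/

import Mathlib

open Matrix BigOperators Finset

noncomputable def fnorm {d r : ℕ} (A : Matrix (Fin d) (Fin r) ℝ) : ℝ :=
  Real.sqrt (∑ i, ∑ j, (A i j) ^ 2)

def ip {d r : ℕ} (A B : Matrix (Fin d) (Fin r) ℝ) : ℝ :=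
  ∑ i, ∑ j, A i j * B i j

def Stiefel (d r : ℕ) : Set (Matrix (Fin d) (Fin r) ℝ) :=
  {x | xᵀ * x = 1}

section Aux

lemma ip_eq_trace {d r : ℕ} (A B : Matrix (Fin d) (Fin r) ℝ) : ip A B = (Aᵀ * B).trace := by
  simp only [ip, Matrix.trace, Matrix.diag, Matrix.mul_apply, Matrix.transpose_apply]
  exact Finset.sum_comm

lemma ip_comm {d r : ℕ} (A B : Matrix (Fin d) (Fin r) ℝ) : ip A B = ip B A := by
  simp [ip, mul_comm]

lemma fnorm_sq {d r : ℕ} (A : Matrix (Fin d) (Fin r) ℝ) : fnorm A ^ 2 = ip A A := by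
  rw [fnorm, Real.sq_sqrt (by positivity)]
  simp [ip, sq]

lemma ip_sub_left {d r : ℕ} (A B C : Matrix (Fin d) (Fin r) ℝ) :
    ip (A - B) C = ip A C - ip B C := by
  simp [ip, Matrix.sub_apply, sub_mul, Finset.sum_sub_distrib]

lemma ip_sub_right {d r : ℕ} (A B C : Matrix (Fin d) (Fin r) ℝ) :
    ip A (B - C) = ip A B - ip A C := by
  simp [ip, Matrix.sub_apply, mul_sub, Finset.sum_sub_distrib]

lemma ip_smul_left {d r : ℕ} (c : ℝ) (A B : Matrix (Fin d) (Fin r) ℝ) :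
    ip (c • A) B = c * ip A B := by
  simp [ip, Matrix.smul_apply, Finset.mul_sum, mul_assoc]

lemma ip_sum_left {n d r : ℕ} (f : Fin n → Matrix (Fin d) (Fin r) ℝ)
    (B : Matrix (Fin d) (Fin r) ℝ) :
    ip (∑ j, f j) B = ∑ j, ip (f j) B := by
  simp only [ip, Matrix.sum_apply, Finset.sum_mul]
  calc ∑ k, ∑ l, ∑ j, f j k l * B k l
      = ∑ k, ∑ j, ∑ l, f j k l * B k l := Finset.sum_congr rfl fun k _ => Finset.sum_comm
    _ = ∑ j, ∑ k, ∑ l, f j k l * B k l := Finset.sum_comm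

lemma ip_self_nonneg {d r : ℕ} (A : Matrix (Fin d) (Fin r) ℝ) : 0 ≤ ip A A :=
  Finset.sum_nonneg fun _ _ => Finset.sum_nonneg fun _ _ => mul_self_nonneg _

lemma ip_sub_sub {d r : ℕ} (A B : Matrix (Fin d) (Fin r) ℝ) :
    ip (A - B) (A - B) = ip A A - 2 * ip A B + ip B B := by
  rw [ip_sub_left, ip_sub_right, ip_sub_right, ip_comm B A]; ring

lemma trace_transpose_mul_symm {r : ℕ} (P M : Matrix (Fin r) (Fin r) ℝ) (hM : Mᵀ = M) :
    (Pᵀ * M).trace = (P * M).trace := by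
  rw [← Matrix.trace_transpose (Pᵀ * M), Matrix.transpose_mul, Matrix.transpose_transpose, hM,
    Matrix.trace_mul_comm]

lemma ip_prod_trace {d r : ℕ} (A B C : Matrix (Fin d) (Fin r) ℝ) :
    ip (A * Cᵀ) (B * Cᵀ) = ((Aᵀ * B) * (Cᵀ * C)).trace := by
  rw [ip_eq_trace, Matrix.transpose_mul, Matrix.transpose_transpose]
  simp only [Matrix.mul_assoc]
  rw [Matrix.trace_mul_comm]
  simp only [Matrix.mul_assoc]

lemma sum3_rot {a b c : ℕ} (f : Fin a → Fin b → Fin c → ℝ) :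
    ∑ i, ∑ k, ∑ l, f i k l = ∑ k, ∑ l, ∑ i, f i k l := by
  rw [Finset.sum_comm]
  exact Finset.sum_congr rfl fun k _ => Finset.sum_comm

lemma sum4_rot {a b c e : ℕ} (f : Fin a → Fin b → Fin c → Fin e → ℝ) :
    ∑ i, ∑ j, ∑ k, ∑ l, f i j k l = ∑ k, ∑ l, ∑ i, ∑ j, f i j k l := by
  calc ∑ i, ∑ j, ∑ k, ∑ l, f i j k l
      = ∑ i, ∑ k, ∑ l, ∑ j, f i j k l := Finset.sum_congr rfl fun i _ => sum3_rot _
    _ = ∑ k, ∑ l, ∑ i, ∑ j, f i j k l := sum3_rot _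

lemma quad_lower_aux {N : ℕ} (U : Matrix (Fin N) (Fin N) ℝ) (lam : Fin N → ℝ)
    (hUU : U * Uᵀ = 1) (lamN : ℝ) (hmin : ∀ k, lamN ≤ lam k) (v : Fin N → ℝ) :
    lamN * (v ⬝ᵥ v) ≤ v ⬝ᵥ ((U * Matrix.diagonal lam * Uᵀ) *ᵥ v) := by
  classical
  set w : Fin N → ℝ := Uᵀ *ᵥ v with hw
  have hvw : v ᵥ* U = w := by rw [hw, Matrix.mulVec_transpose]
  have h1 : v ⬝ᵥ ((U * Matrix.diagonal lam * Uᵀ) *ᵥ v) = ∑ k, lam k * (w k)^2 := by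
    rw [← Matrix.mulVec_mulVec, ← Matrix.mulVec_mulVec, Matrix.dotProduct_mulVec, hvw, ← hw]
    simp [Matrix.mulVec_diagonal, dotProduct, sq]
    exact Finset.sum_congr rfl fun k _ => by ring
  have h2 : v ⬝ᵥ v = ∑ k, (w k)^2 := by
    have h : w ⬝ᵥ w = v ⬝ᵥ v := by
      rw [hw, Matrix.dotProduct_mulVec, Matrix.vecMul_transpose, Matrix.mulVec_mulVec, hUU,
        Matrix.one_mulVec]
    rw [← h]
    simp [dotProduct, sq]
  rw [h1, h2, Finset.mul_sum]
  exact Finset.sum_le_sum fun k _ => mul_le_mul_of_nonneg_right (hmin k) (sq_nonneg _)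

lemma quad_lower {N : ℕ} (W : Matrix (Fin N) (Fin N) ℝ) (hsymm : W.IsSymm) (lamN : ℝ)
    (hlb : lamN ∈ lowerBounds {t : ℝ | ∃ v : Fin N → ℝ, v ≠ 0 ∧ W.mulVec v = t • v})
    (v : Fin N → ℝ) :
    lamN * (v ⬝ᵥ v) ≤ v ⬝ᵥ (W *ᵥ v) := by
  classical
  have hW : W.IsHermitian := hsymm
  set U : Matrix (Fin N) (Fin N) ℝ := (hW.eigenvectorUnitary : Matrix (Fin N) (Fin N) ℝ) with hU
  have hstar : star U = Uᵀ := Matrix.conjTranspose_eq_transpose_of_trivial U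
  have hUU : U * Uᵀ = 1 := by
    rw [← hstar]; exact Unitary.mul_star_self_of_mem hW.eigenvectorUnitary.2
  have hmin : ∀ k, lamN ≤ hW.eigenvalues k := by
    intro k
    refine hlb ⟨(WithLp.equiv 2 _) (hW.eigenvectorBasis k), ?_, hW.mulVec_eigenvectorBasis k⟩
    intro h0
    have h : hW.eigenvectorBasis k = 0 := by
      apply (WithLp.equiv 2 _).injective
      simpa using h0
    have h1 : ‖hW.eigenvectorBasis k‖ = 1 := hW.eigenvectorBasis.orthonormal.1 k
    rw [h] at h1
    simp at h1
  have hspec : W = U * Matrix.diagonal hW.eigenvalues * Uᵀ := by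
    have h := hW.spectral_theorem
    rw [Unitary.conjStarAlgAut_apply, ← hU, hstar] at h
    simpa [RCLike.ofReal_real_eq_id] using h
  calc lamN * (v ⬝ᵥ v) ≤ v ⬝ᵥ ((U * Matrix.diagonal hW.eigenvalues * Uᵀ) *ᵥ v) :=
        quad_lower_aux U hW.eigenvalues hUU lamN hmin v
    _ = v ⬝ᵥ (W *ᵥ v) := by rw [← hspec]

lemma grad_corr {N d r : ℕ} (w : Fin N → ℝ) (hw : ∑ j, w j = 1)
    (x : Fin N → Matrix (Fin d) (Fin r) ℝ) (hx : ∀ j, (x j)ᵀ * x j = 1)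
    (X Y : Matrix (Fin d) (Fin r) ℝ) (hX : Xᵀ * X = 1) (hY : Yᵀ * Y = 1)
    (E : Matrix (Fin d) (Fin r) ℝ) (hE : E = X - ∑ j, w j • x j) :
    ip (X * (Xᵀ * E + Eᵀ * X)) (Y - X)
      = -(1/2) * ∑ j, w j * ip (X * (Y - X)ᵀ - x j * (Y - X)ᵀ)
          (X * (Y - X)ᵀ - x j * (Y - X)ᵀ) := by
  obtain ⟨D, hD⟩ : ∃ D, Y - X = D := ⟨_, rfl⟩
  obtain ⟨T, hT⟩ : ∃ T, Xᵀ * E + Eᵀ * X = T := ⟨_, rfl⟩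
  obtain ⟨M, hM⟩ : ∃ M, Dᵀ * D = M := ⟨_, rfl⟩
  rw [hD, hT]
  have hTt : Tᵀ = T := by
    rw [← hT, Matrix.transpose_add, Matrix.transpose_mul, Matrix.transpose_mul,
      Matrix.transpose_transpose, Matrix.transpose_transpose, add_comm]
  have hMt : Mᵀ = M := by
    rw [← hM, Matrix.transpose_mul, Matrix.transpose_transpose]
  have h1 : Xᵀ * D = Xᵀ * Y - 1 := by rw [← hD, Matrix.mul_sub, hX]
  have h2 : Dᵀ * X = Yᵀ * X - 1 := by rw [← hD, Matrix.transpose_sub, Matrix.sub_mul, hX]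
  have h3 : M = 1 - Yᵀ * X - Xᵀ * Y + 1 := by
    rw [← hM, ← hD, Matrix.transpose_sub, Matrix.sub_mul, Matrix.mul_sub, Matrix.mul_sub, hX, hY]
    abel
  have hXD : Xᵀ * D + Dᵀ * X = -M := by rw [h1, h2, h3]; abel
  have key1 : ip (X * T) D = (T * (Xᵀ * D)).trace := by
    rw [ip_eq_trace, Matrix.transpose_mul, hTt, Matrix.mul_assoc]
  have key2 : (T * (Xᵀ * D)).trace = (T * (Dᵀ * X)).trace := by
    rw [← Matrix.trace_transpose (T * (Xᵀ * D)), Matrix.transpose_mul, hTt,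
      Matrix.transpose_mul, Matrix.transpose_transpose, Matrix.trace_mul_comm]
  have key3 : ip (X * T) D = -(1/2) * (T * M).trace := by
    have h2' : (T * (Xᵀ * D + Dᵀ * X)).trace = (T * (Xᵀ * D)).trace + (T * (Dᵀ * X)).trace := by
      rw [Matrix.mul_add, Matrix.trace_add]
    have h2 : ip (X * T) D + ip (X * T) D = (T * (Xᵀ * D + Dᵀ * X)).trace := by
      rw [h2', key1, key2]
    rw [hXD] at h2
    have h3 : (T * (-M)).trace = -((T * M).trace) := by
      rw [Matrix.mul_neg, Matrix.trace_neg]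
    rw [h3] at h2
    linarith
  have hXE : Xᵀ * E = 1 - Xᵀ * (∑ j, w j • x j) := by rw [hE, Matrix.mul_sub, hX]
  have hEX : Eᵀ * X = 1 - (∑ j, w j • x j)ᵀ * X := by
    rw [hE, Matrix.transpose_sub, Matrix.sub_mul, hX]
  have hsum1 : Xᵀ * (∑ j, w j • x j) * M = ∑ j, w j • (Xᵀ * x j * M) := by
    rw [Matrix.mul_sum, Finset.sum_mul]
    exact Finset.sum_congr rfl fun j _ => by
      rw [Matrix.mul_smul, Matrix.smul_mul]
  have hsum2 : (∑ j, w j • x j)ᵀ * X * M = ∑ j, w j • ((x j)ᵀ * X * M) := by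
    rw [Matrix.transpose_sum, Matrix.sum_mul, Finset.sum_mul]
    exact Finset.sum_congr rfl fun j _ => by
      rw [Matrix.transpose_smul, Matrix.smul_mul, Matrix.smul_mul]
  have htr4 : ∀ j, ((x j)ᵀ * X * M).trace = (Xᵀ * x j * M).trace := by
    intro j
    have h : (x j)ᵀ * X = (Xᵀ * x j)ᵀ := by
      rw [Matrix.transpose_mul, Matrix.transpose_transpose]
    rw [h, Matrix.mul_assoc, trace_transpose_mul_symm _ _ hMt, ← Matrix.mul_assoc]
  have htr5 : ∀ j, (Xᵀ * x j * M).trace = ip (X * Dᵀ) (x j * Dᵀ) := by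
    intro j
    rw [ip_prod_trace, hM]
  have htrM1 : ip (X * Dᵀ) (X * Dᵀ) = M.trace := by
    rw [ip_prod_trace, hX, Matrix.one_mul, hM]
  have htrM2 : ∀ j, ip (x j * Dᵀ) (x j * Dᵀ) = M.trace := by
    intro j
    rw [ip_prod_trace, hx j, Matrix.one_mul, hM]
  have hs1 : ∑ j, w j * (Xᵀ * x j * M).trace = ∑ j, w j * ip (X * Dᵀ) (x j * Dᵀ) :=
    Finset.sum_congr rfl fun j _ => by rw [htr5 j]
  have hs2 : ∑ j, w j * ((x j)ᵀ * X * M).trace = ∑ j, w j * ip (X * Dᵀ) (x j * Dᵀ) :=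
    Finset.sum_congr rfl fun j _ => by rw [htr4 j, htr5 j]
  have hTM : (T * M).trace = ∑ j, w j * ip (X * Dᵀ - x j * Dᵀ) (X * Dᵀ - x j * Dᵀ) := by
    have e1 : (T * M).trace
        = 2 * M.trace - 2 * ∑ j, w j * ip (X * Dᵀ) (x j * Dᵀ) := by
      rw [← hT, Matrix.add_mul, Matrix.trace_add, hXE, hEX, Matrix.sub_mul, Matrix.sub_mul]
      simp only [Matrix.one_mul, Matrix.trace_sub]
      rw [hsum1, hsum2, Matrix.trace_sum, Matrix.trace_sum]
      simp only [Matrix.trace_smul, smul_eq_mul]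
      rw [hs1, hs2]
      ring
    rw [e1]
    have e2 : 2 * M.trace = ∑ j, w j * (2 * M.trace) := by
      rw [← Finset.sum_mul, hw, one_mul]
    rw [e2, Finset.mul_sum, ← Finset.sum_sub_distrib]
    refine Finset.sum_congr rfl fun j _ => ?_
    rw [ip_sub_sub, htrM1, htrM2 j]
    ring
  rw [key3, hTM]

end Aux

theorem stmt8 {N d r : ℕ} (W : Matrix (Fin N) (Fin N) ℝ)
    (hsymm : W.IsSymm) (hnn : ∀ i j, 0 ≤ W i j) (hrow : ∀ i, ∑ j, W i j = 1)
    (lamN : ℝ)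
    (hlamN : IsLeast {t : ℝ | ∃ v : Fin N → ℝ, v ≠ 0 ∧ W.mulVec v = t • v} lamN)
    (x y : Fin N → Matrix (Fin d) (Fin r) ℝ)
    (hx : ∀ i, x i ∈ Stiefel d r) (hy : ∀ i, y i ∈ Stiefel d r)
    (egrad : Fin N → Matrix (Fin d) (Fin r) ℝ)
    (hegrad : ∀ i, egrad i = x i - ∑ j, W i j • x j)
    (rgrad : Fin N → Matrix (Fin d) (Fin r) ℝ)
    (hrgrad : ∀ i, rgrad i =
      egrad i - ((1 : ℝ) / 2) • (x i * ((x i)ᵀ * egrad i + (egrad i)ᵀ * x i))) :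
    (1 / 4) * (∑ i, ∑ j, W i j * fnorm (y i - y j) ^ 2)
      - (1 / 4) * (∑ i, ∑ j, W i j * fnorm (x i - x j) ^ 2)
      - ∑ i, ip (rgrad i) (y i - x i)
      ≤ ((1 - lamN) / 2) * ∑ i, fnorm (y i - x i) ^ 2 := by
  classical
  have hx' : ∀ i, (x i)ᵀ * x i = 1 := hx
  have hy' : ∀ i, (y i)ᵀ * y i = 1 := hy
  have hxx : ∀ i, ip (x i) (x i) = (r : ℝ) := by
    intro i
    rw [ip_eq_trace, hx' i, Matrix.trace_one]
    simp
  have hyy : ∀ i, ip (y i) (y i) = (r : ℝ) := by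
    intro i
    rw [ip_eq_trace, hy' i, Matrix.trace_one]
    simp
  -- per-node Riemannian-gradient correction
  have hcorr : ∀ i, ip (rgrad i) (y i - x i)
      = ip (egrad i) (y i - x i)
        + (1/4) * ∑ j, W i j * ip (x i * (y i - x i)ᵀ - x j * (y i - x i)ᵀ)
            (x i * (y i - x i)ᵀ - x j * (y i - x i)ᵀ) := by
    intro i
    rw [hrgrad i, ip_sub_left, ip_smul_left,
      grad_corr (fun j => W i j) (hrow i) x hx' (x i) (y i) (hx' i) (hy' i) (egrad i) (hegrad i)]
    ring
  have hsplit : ∑ i, ip (rgrad i) (y i - x i)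
      = ∑ i, ip (egrad i) (y i - x i)
        + ∑ i, (1/4) * ∑ j, W i j * ip (x i * (y i - x i)ᵀ - x j * (y i - x i)ᵀ)
            (x i * (y i - x i)ᵀ - x j * (y i - x i)ᵀ) := by
    rw [← Finset.sum_add_distrib]
    exact Finset.sum_congr rfl fun i _ => hcorr i
  have hCnn : 0 ≤ ∑ i, (1/4) * ∑ j, W i j * ip (x i * (y i - x i)ᵀ - x j * (y i - x i)ᵀ)
      (x i * (y i - x i)ᵀ - x j * (y i - x i)ᵀ) :=
    Finset.sum_nonneg fun i _ => mul_nonneg (by norm_num)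
      (Finset.sum_nonneg fun j _ => mul_nonneg (hnn i j) (ip_self_nonneg _))
  -- expansions
  have hfy : ∀ i j, fnorm (y i - y j) ^ 2 = 2*(r:ℝ) - 2 * ip (y i) (y j) := by
    intro i j
    rw [fnorm_sq, ip_sub_sub, hyy i, hyy j]
    ring
  have hfx : ∀ i j, fnorm (x i - x j) ^ 2 = 2*(r:ℝ) - 2 * ip (x j) (x i) := by
    intro i j
    rw [fnorm_sq, ip_sub_sub, hxx i, hxx j, ip_comm (x i) (x j)]
    ring
  have hegr : ∀ i, ip (egrad i) (y i - x i)
      = ip (x i) (y i) - (r:ℝ) - ∑ j, W i j * (ip (x j) (y i) - ip (x j) (x i)) := by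
    intro i
    have h : ∀ j, ip (W i j • x j) (y i - x i) = W i j * (ip (x j) (y i) - ip (x j) (x i)) :=
      fun j => by rw [ip_smul_left, ip_sub_right]
    rw [hegrad i, ip_sub_left, ip_sub_right, hxx i, ip_sum_left,
      Finset.sum_congr rfl fun j _ => h j]
  have outer : ∀ (t : Fin N → ℝ), ∑ i, (2*(r:ℝ) - 2 * t i) = 2*(r:ℝ)*(N:ℝ) - 2*∑ i, t i := by
    intro t
    rw [Finset.sum_sub_distrib, Finset.sum_const, ← Finset.mul_sum]
    simp only [Finset.card_univ, Fintype.card_fin, nsmul_eq_mul]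
    ring
  have H1 : ∑ i, ∑ j, W i j * fnorm (y i - y j) ^ 2
      = 2*(r:ℝ)*(N:ℝ) - 2 * ∑ i, ∑ j, W i j * ip (y i) (y j) := by
    have inner : ∀ i, ∑ j, W i j * fnorm (y i - y j) ^ 2
        = 2*(r:ℝ) - 2 * ∑ j, W i j * ip (y i) (y j) := by
      intro i
      have h : ∀ j, W i j * fnorm (y i - y j) ^ 2
          = 2*(r:ℝ)*W i j - 2*(W i j * ip (y i) (y j)) := fun j => by rw [hfy i j]; ring
      rw [Finset.sum_congr rfl fun j _ => h j, Finset.sum_sub_distrib, ← Finset.mul_sum,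
        ← Finset.mul_sum, hrow i]
      ring
    rw [Finset.sum_congr rfl fun i _ => inner i, outer _]
  have H2 : ∑ i, ∑ j, W i j * fnorm (x i - x j) ^ 2
      = 2*(r:ℝ)*(N:ℝ) - 2 * ∑ i, ∑ j, W i j * ip (x j) (x i) := by
    have inner : ∀ i, ∑ j, W i j * fnorm (x i - x j) ^ 2
        = 2*(r:ℝ) - 2 * ∑ j, W i j * ip (x j) (x i) := by
      intro i
      have h : ∀ j, W i j * fnorm (x i - x j) ^ 2
          = 2*(r:ℝ)*W i j - 2*(W i j * ip (x j) (x i)) := fun j => by rw [hfx i j]; ring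
      rw [Finset.sum_congr rfl fun j _ => h j, Finset.sum_sub_distrib, ← Finset.mul_sum,
        ← Finset.mul_sum, hrow i]
      ring
    rw [Finset.sum_congr rfl fun i _ => inner i, outer _]
  have H3 : ∑ i, ip (egrad i) (y i - x i)
      = ∑ i, ip (x i) (y i) - (r:ℝ)*(N:ℝ)
        - ∑ i, ∑ j, W i j * ip (x j) (y i) + ∑ i, ∑ j, W i j * ip (x j) (x i) := by
    have h : ∀ i, ip (egrad i) (y i - x i)
        = ip (x i) (y i) - (r:ℝ)
          - (∑ j, W i j * ip (x j) (y i) - ∑ j, W i j * ip (x j) (x i)) := by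
      intro i
      rw [hegr i]
      rw [Finset.sum_congr rfl fun j (_ : j ∈ univ) => mul_sub (W i j) _ _,
        Finset.sum_sub_distrib]
    rw [Finset.sum_congr rfl fun i _ => h i]
    simp only [Finset.sum_sub_distrib, Finset.sum_const, Finset.card_univ, Fintype.card_fin,
      nsmul_eq_mul]
    ring
  have H4 : ∑ i, ip (y i - x i) (y i - x i) = 2*(r:ℝ)*(N:ℝ) - 2*∑ i, ip (x i) (y i) := by
    have h : ∀ i, ip (y i - x i) (y i - x i) = 2*(r:ℝ) - 2 * ip (x i) (y i) := by
      intro i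
      rw [ip_sub_sub, hyy i, hxx i, ip_comm (y i) (x i)]
      ring
    rw [Finset.sum_congr rfl fun i _ => h i, outer _]
  have hswap : ∑ i, ∑ j, W i j * ip (x i) (y j) = ∑ i, ∑ j, W i j * ip (x j) (y i) := by
    rw [Finset.sum_comm]
    exact Finset.sum_congr rfl fun i _ => Finset.sum_congr rfl fun j _ => by
      rw [hsymm.apply i j]
  have H5 : ∑ i, ∑ j, W i j * ip (y i - x i) (y j - x j)
      = ∑ i, ∑ j, W i j * ip (y i) (y j) - 2 * ∑ i, ∑ j, W i j * ip (x j) (y i)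
        + ∑ i, ∑ j, W i j * ip (x j) (x i) := by
    have h : ∀ i j, W i j * ip (y i - x i) (y j - x j)
        = W i j * ip (y i) (y j) - W i j * ip (x j) (y i) - W i j * ip (x i) (y j)
          + W i j * ip (x j) (x i) := by
      intro i j
      rw [ip_sub_left, ip_sub_right, ip_sub_right, ip_comm (y i) (x j), ip_comm (x i) (x j)]
      ring
    rw [Finset.sum_congr rfl fun i _ => Finset.sum_congr rfl fun j _ => h i j]
    simp only [Finset.sum_sub_distrib, Finset.sum_add_distrib]
    rw [hswap]
    ring
  -- eigenvalue bound
  have hquad : lamN * ∑ i, ip (y i - x i) (y i - x i)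
      ≤ ∑ i, ∑ j, W i j * ip (y i - x i) (y j - x j) := by
    have hv : ∀ (k : Fin d) (l : Fin r),
        lamN * ∑ i, ((y i - x i) k l * (y i - x i) k l)
        ≤ ∑ i, ∑ j, W i j * ((y i - x i) k l * (y j - x j) k l) := by
      intro k l
      have h := quad_lower W hsymm lamN hlamN.2 (fun i => (y i - x i) k l)
      simp only [dotProduct, Matrix.mulVec] at h
      calc lamN * ∑ i, ((y i - x i) k l * (y i - x i) k l) ≤
            ∑ i, (y i - x i) k l * ∑ j, W i j * (y j - x j) k l := h
        _ = ∑ i, ∑ j, W i j * ((y i - x i) k l * (y j - x j) k l) :=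
            Finset.sum_congr rfl fun i _ => by
              rw [Finset.mul_sum]
              exact Finset.sum_congr rfl fun j _ => by ring
    have hL : ∑ i, ip (y i - x i) (y i - x i)
        = ∑ k, ∑ l, ∑ i, ((y i - x i) k l * (y i - x i) k l) := by
      simp only [ip]
      exact sum3_rot _
    have hR : ∑ i, ∑ j, W i j * ip (y i - x i) (y j - x j)
        = ∑ k, ∑ l, ∑ i, ∑ j, W i j * ((y i - x i) k l * (y j - x j) k l) := by
      simp only [ip, Finset.mul_sum]
      exact sum4_rot _
    rw [hL, hR]
    simp only [Finset.mul_sum]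
    exact Finset.sum_le_sum fun k _ => Finset.sum_le_sum fun l _ => by
      have := hv k l
      rw [Finset.mul_sum] at this
      exact this
  have hRHS : ∑ i, fnorm (y i - x i) ^ 2 = ∑ i, ip (y i - x i) (y i - x i) :=
    Finset.sum_congr rfl fun i _ => fnorm_sq _
  rw [hsplit, H1, H2, H3, hRHS]
  have hE5 := H5
  have hE4 := H4
  linarith [hquad, hCnn]
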